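/- Let (X, d, μ) be an upper doubling, geometrically doubling metric measure space with μ(X) < ∞, and let T be sublinear and bounded from H¹(μ) to L^{1,∞}(μ) with ∫_X |T1|^r dμ < ∞ for some r ∈ (0,1). If g ∈ L^∞(μ) with ‖g‖_{L^∞(μ)} ≤ ℓ, then (1/μ(X)) ∫_X |Tg(x)|^r dμ(x) ≤ C ℓ^r, where C depends on μ(X), r, and the operator norms. -/

import Mathlib

open Metric MeasureTheory
open scoped ENNReal

/-- Tolsa-Hytönen coefficient `δ(B, S)` of two balls `B ⊆ S`. -/
noncomputable def delta {X : Type*} [MetricSpace X] [MeasurableSpace X]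
    (μ : Measure X) (Λ : X → ℝ → ℝ) (cB : X) (rB : ℝ) (cS : X) (rS : ℝ) : ℝ :=
  (∫⁻ x in ball cS (2 * rS) \ ball cB rB,
      ENNReal.ofReal ((Λ cB (dist x cB))⁻¹) ∂μ).toReal

/-- `b` is a `(q,1)_λ`-atomic block with coefficient sum `M`. -/
def IsAtomicBlock {X : Type*} [MetricSpace X] [MeasurableSpace X]
    (μ : Measure X) (Λ : X → ℝ → ℝ) (ρ q : ℝ) (b : X → ℝ) (M : ℝ) : Prop :=
  ∃ (cB c₁ c₂ : X) (rB r₁ r₂ l₁ l₂ : ℝ) (a₁ a₂ : X → ℝ),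
    0 < rB ∧ 0 < r₁ ∧ 0 < r₂ ∧
    ball c₁ r₁ ⊆ ball cB rB ∧ ball c₂ r₂ ⊆ ball cB rB ∧
    Function.support b ⊆ ball cB rB ∧
    Function.support a₁ ⊆ ball c₁ r₁ ∧ Function.support a₂ ⊆ ball c₂ r₂ ∧
    Integrable b μ ∧ (∫ x, b x ∂μ) = 0 ∧
    (∀ x, b x = l₁ * a₁ x + l₂ * a₂ x) ∧
    eLpNorm a₁ (ENNReal.ofReal q) μ ≤
      (μ (ball c₁ (ρ * r₁))) ^ (1 / q - 1) *
        (ENNReal.ofReal (1 + delta μ Λ c₁ r₁ cB rB))⁻¹ ∧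
    eLpNorm a₂ (ENNReal.ofReal q) μ ≤
      (μ (ball c₂ (ρ * r₂))) ^ (1 / q - 1) *
        (ENNReal.ofReal (1 + delta μ Λ c₂ r₂ cB rB))⁻¹ ∧
    M = |l₁| + |l₂|

/-- The atomic Hardy space norm `‖f‖_{H¹(μ)}` (value `⊤` if `f ∉ H¹(μ)`). -/
noncomputable def H1Norm {X : Type*} [MetricSpace X] [MeasurableSpace X]
    (μ : Measure X) (Λ : X → ℝ → ℝ) (ρ q : ℝ) (f : X → ℝ) : ℝ≥0∞ :=
  ⨅ (d : {bM : (ℕ → X → ℝ) × (ℕ → ℝ) //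
      (∀ j, IsAtomicBlock μ Λ ρ q (bM.1 j) (bM.2 j)) ∧
      ∀ᵐ x ∂μ, HasSum (fun j => bM.1 j x) (f x)}),
    ∑' j, ENNReal.ofReal (d.1.2 j)

set_option maxHeartbeats 1000000

private lemma rpow_subadd {a b r : ℝ} (ha : 0 ≤ a) (hb : 0 ≤ b) (h0 : 0 < r) (h1 : r ≤ 1) :
    (a + b) ^ r ≤ a ^ r + b ^ r := by
  have key := NNReal.rpow_add_rpow_le a.toNNReal b.toNNReal h0 h1
  simp only [NNReal.rpow_one, one_div_one, NNReal.rpow_natCast] at key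
  have k2 : (a.toNNReal + b.toNNReal) ^ r ≤ ((a.toNNReal ^ r + b.toNNReal ^ r) ^ (1/r)) ^ r :=
    NNReal.rpow_le_rpow key h0.le
  rw [← NNReal.rpow_mul, one_div_mul_cancel h0.ne', NNReal.rpow_one] at k2
  have k3 := NNReal.coe_le_coe.mpr k2
  push_cast [NNReal.coe_rpow] at k3
  rwa [Real.coe_toNNReal _ ha, Real.coe_toNNReal _ hb] at k3

theorem h1_aux {X : Type*} [MetricSpace X] [MeasurableSpace X] [BorelSpace X]
    (μ : Measure X) (Λ : X → ℝ → ℝ) (ρ q : ℝ)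
    (hΛpos : ∀ (x : X) (r : ℝ), 0 < r → 0 < Λ x r)
    (hΛmono : ∀ (x : X) (r s : ℝ), 0 < r → r ≤ s → Λ x r ≤ Λ x s)
    (hq : 1 < q) (hfin : μ Set.univ < ⊤) (hpos : 0 < μ Set.univ) :
    ∃ K : ℝ, 0 < K ∧ ∀ g : X → ℝ, Measurable g → ∀ ℓ : ℝ, 0 < ℓ → (∀ x, |g x| ≤ ℓ) →
      H1Norm μ Λ ρ q (fun x => g x - (∫ y, g y ∂μ) / (μ Set.univ).toReal) ≤
        ENNReal.ofReal (K * ℓ) := by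
  classical
  have q0 : (0:ℝ) < q := lt_trans one_pos hq
  have hinvq : (0:ℝ) < 1/q := by positivity
  have hinvq1 : (1:ℝ)/q ≤ 1 := by rw [div_le_one q0]; linarith
  -- nonempty
  have hne : Nonempty X := by
    rcases isEmpty_or_nonempty X with h | h
    · exfalso
      rw [Set.univ_eq_empty_iff.mpr h, measure_empty] at hpos
      exact lt_irrefl _ hpos
    · exact h
  obtain ⟨x₀⟩ := hne
  have hcov : (⋃ n : ℕ, ball x₀ (n : ℝ)) = Set.univ := by
    ext x
    simp only [Set.mem_iUnion, Set.mem_univ, iff_true, mem_ball]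
    obtain ⟨n, hn⟩ := exists_nat_gt (dist x x₀)
    exact ⟨n, hn⟩
  have hex0 : ∃ n : ℕ, 0 < μ (ball x₀ (n:ℝ)) := by
    by_contra h
    push_neg at h
    have h0 : μ (⋃ n : ℕ, ball x₀ (n:ℝ)) = 0 :=
      measure_iUnion_null fun n => le_antisymm (h n) bot_le
    rw [hcov] at h0
    exact absurd h0 hpos.ne'
  obtain ⟨n₀, hn₀⟩ := hex0
  have hmb : Monotone (fun n : ℕ => ball x₀ (n:ℝ)) :=
    fun i j hij => ball_subset_ball (by exact_mod_cast hij)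
  have htend : Filter.Tendsto (fun n : ℕ => μ (Set.univ \ ball x₀ (n:ℝ)))
      Filter.atTop (nhds 0) := by
    have h1 : ∀ n : ℕ, NullMeasurableSet (Set.univ \ ball x₀ (n:ℝ)) μ :=
      fun n => (MeasurableSet.univ.diff measurableSet_ball).nullMeasurableSet
    have h2 : Antitone (fun n : ℕ => Set.univ \ ball x₀ (n:ℝ)) :=
      fun i j hij => Set.diff_subset_diff_right (hmb hij)
    have h3 := tendsto_measure_iInter_atTop h1 h2
      ⟨0, (lt_of_le_of_lt (measure_mono (Set.diff_subset.trans (Set.subset_univ _))) hfin).ne⟩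
    have h4 : (⋂ n : ℕ, Set.univ \ ball x₀ (n:ℝ)) = ∅ := by
      rw [← Set.diff_iUnion, hcov, Set.diff_self]
    rw [h4, measure_empty] at h3
    exact h3
  have hNex : ∀ j : ℕ, ∃ n : ℕ,
      μ (Set.univ \ ball x₀ (n:ℝ)) ≤ ENNReal.ofReal (((2:ℝ)⁻¹ ^ (j+1)) ^ q) := by
    intro j
    have hε : (0:ℝ≥0∞) < ENNReal.ofReal (((2:ℝ)⁻¹ ^ (j+1)) ^ q) := by
      rw [ENNReal.ofReal_pos]; positivity
    exact ((htend.eventually (gt_mem_nhds hε)).exists).imp (fun n hn => hn.le)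
  choose N hN using hNex
  set Rn : ℕ → ℕ := fun j => (Finset.range (j+1)).sup N + n₀ + j + 1 with hRndef
  set R : ℕ → ℝ := fun j => (Rn j : ℝ) with hRdef
  have hsupmono : ∀ {i j : ℕ}, i ≤ j →
      (Finset.range (i+1)).sup N ≤ (Finset.range (j+1)).sup N :=
    fun h => Finset.sup_mono (Finset.range_subset_range.mpr (by omega))
  have hRpos : ∀ j, 0 < R j := fun j => by
    simp only [hRdef]; exact_mod_cast Nat.succ_pos _
  have hRmono : ∀ {i j : ℕ}, i ≤ j → R i ≤ R j := by
    intro i j h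
    have h1 := hsupmono h
    simp only [hRdef, hRndef]
    exact_mod_cast by omega
  have hRn₀ : ∀ j, (n₀ : ℝ) ≤ R j := fun j => by
    simp only [hRdef, hRndef]; exact_mod_cast by omega
  have hRN : ∀ j, (N j : ℝ) ≤ R j := fun j => by
    have h1 : N j ≤ (Finset.range (j+1)).sup N :=
      Finset.le_sup (by simp : j ∈ Finset.range (j+1))
    simp only [hRdef, hRndef]
    exact_mod_cast by omega
  have hRtail : ∀ j, μ (Set.univ \ ball x₀ (R j)) ≤
      ENNReal.ofReal (((2:ℝ)⁻¹ ^ (j+1)) ^ q) :=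
    fun j => le_trans (measure_mono (Set.diff_subset_diff_right (ball_subset_ball (hRN j)))) (hN j)
  have hcovR : ∀ x, ∃ j, x ∈ ball x₀ (R j) := by
    intro x
    obtain ⟨n, hn⟩ := exists_nat_gt (dist x x₀)
    refine ⟨n, mem_ball.mpr (hn.trans_le ?_)⟩
    simp only [hRdef, hRndef]
    exact_mod_cast by omega
  -- annuli
  set Bs : ℕ → Set X := fun j => ball x₀ (R j) with hBsdef
  set Aset : ℕ → Set X := fun j => Bs (j+1) \ (if j = 0 then (∅ : Set X) else Bs j) with hAdef
  have hAm : ∀ j, MeasurableSet (Aset j) := by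
    intro j
    apply measurableSet_ball.diff
    split_ifs
    · exact MeasurableSet.empty
    · exact measurableSet_ball
  have hAsub : ∀ j, Aset j ⊆ Bs (j+1) := fun j => Set.diff_subset
  have hBsub : ∀ {i j : ℕ}, i ≤ j → Bs i ⊆ Bs j := fun h => ball_subset_ball (hRmono h)
  have hAdisj : Pairwise (Function.onFun Disjoint Aset) := by
    have key : ∀ i j : ℕ, i < j → Disjoint (Aset i) (Aset j) := by
      intro i j h
      rw [Set.disjoint_left]
      intro x hxi hxj
      have h1 : x ∈ Bs j := hBsub (by omega : i+1 ≤ j) (hAsub i hxi)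
      have h2 : x ∉ Bs j := by
        have h3 := hxj.2
        rwa [if_neg (by omega : j ≠ 0)] at h3
      exact h2 h1
    intro i j hij
    rcases lt_or_gt_of_ne hij with h | h
    · exact key i j h
    · exact (key j i h).symm
  have hAcov : (⋃ j, Aset j) = Set.univ := by
    ext x
    simp only [Set.mem_iUnion, Set.mem_univ, iff_true]
    have hex := hcovR x
    by_cases hk0 : Nat.find hex = 0
    · refine ⟨0, ⟨?_, by simp⟩⟩
      exact hBsub (by omega : 0 ≤ 1) (hk0 ▸ Nat.find_spec hex)
    · obtain ⟨mm, hm⟩ : ∃ mm, Nat.find hex = mm + 1 := ⟨Nat.find hex - 1, by omega⟩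
      refine ⟨mm, ⟨by rw [← hm] at *; exact Nat.find_spec hex, ?_⟩⟩
      by_cases hm0 : mm = 0
      · rw [if_pos hm0]; exact Set.notMem_empty x
      · rw [if_neg hm0]
        exact Nat.find_min hex (by omega : mm < Nat.find hex)
  -- measures
  set MX : ℝ := (μ Set.univ).toReal with hMXdef
  have hMX : 0 < MX := ENNReal.toReal_pos hpos.ne' hfin.ne
  set m : ℕ → ℝ := fun j => (μ (Aset j)).toReal with hmdef
  have hm0 : ∀ j, 0 ≤ m j := fun _ => ENNReal.toReal_nonneg
  have hmMX : ∀ j, m j ≤ MX :=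
    fun j => ENNReal.toReal_mono hfin.ne (measure_mono (Set.subset_univ _))
  have hmtail : ∀ j : ℕ, 1 ≤ j → m j ≤ ((2:ℝ)⁻¹ ^ (j+1)) ^ q := by
    intro j hj
    have h1 : Aset j ⊆ Set.univ \ Bs j := by
      intro x hx
      refine ⟨trivial, ?_⟩
      have h2 := hx.2
      rwa [if_neg (by omega : j ≠ 0)] at h2
    have h2 : μ (Aset j) ≤ ENNReal.ofReal (((2:ℝ)⁻¹ ^ (j+1)) ^ q) :=
      le_trans (measure_mono h1) (hRtail j)
    calc m j ≤ (ENNReal.ofReal (((2:ℝ)⁻¹ ^ (j+1)) ^ q)).toReal :=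
          ENNReal.toReal_mono ENNReal.ofReal_ne_top h2
      _ = ((2:ℝ)⁻¹ ^ (j+1)) ^ q := ENNReal.toReal_ofReal (by positivity)
  have hmrq : ∀ j : ℕ, 1 ≤ j → m j ^ (1/q) ≤ (2⁻¹:ℝ) ^ j := by
    intro j hj
    have h1 : m j ^ (1/q) ≤ (((2:ℝ)⁻¹ ^ (j+1)) ^ q) ^ (1/q) :=
      Real.rpow_le_rpow (hm0 j) (hmtail j hj) (by positivity)
    have h2 : (((2:ℝ)⁻¹ ^ (j+1)) ^ q) ^ (1/q) = (2:ℝ)⁻¹ ^ (j+1) := by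
      rw [← Real.rpow_mul (by positivity : (0:ℝ) ≤ 2⁻¹ ^ (j+1)), mul_one_div,
        div_self q0.ne', Real.rpow_one]
    have h3 : ((2:ℝ)⁻¹) ^ (j+1) ≤ (2⁻¹:ℝ) ^ j :=
      pow_le_pow_of_le_one (by norm_num) (by norm_num) (by omega)
    linarith [h1, h2 ▸ h1]
  have hmgeo : ∀ j : ℕ, m j ≤ max MX 1 * (2⁻¹:ℝ)^j := by
    intro j
    rcases Nat.eq_zero_or_pos j with hj | hj
    · subst hj
      simpa using le_trans (hmMX 0) (le_max_left _ _)
    · have h1 := hmtail j hj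
      have hb1 : (0:ℝ) < (2:ℝ)⁻¹ ^ (j+1) := by positivity
      have hb2 : ((2:ℝ)⁻¹ ^ (j+1)) ≤ 1 := by
        apply pow_le_one₀ <;> norm_num
      have h2 : ((2:ℝ)⁻¹ ^ (j+1)) ^ q ≤ ((2:ℝ)⁻¹ ^ (j+1)) ^ (1:ℝ) :=
        Real.rpow_le_rpow_of_exponent_ge hb1 hb2 hq.le
      rw [Real.rpow_one] at h2
      have h3 : ((2:ℝ)⁻¹) ^ (j+1) ≤ 1 * (2⁻¹:ℝ) ^ j := by
        rw [pow_succ, one_mul, mul_comm]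
        nlinarith [pow_nonneg (by norm_num : (0:ℝ) ≤ 2⁻¹) j]
      have h4 : (1:ℝ) * (2⁻¹:ℝ)^j ≤ max MX 1 * (2⁻¹:ℝ)^j := by
        apply mul_le_mul_of_nonneg_right (le_max_right _ _) (by positivity)
      linarith
  -- the Λ and delta bounds
  set Λ₀ : ℝ := Λ x₀ (R 0) with hΛ₀def
  have hΛ₀ : 0 < Λ₀ := hΛpos _ _ (hRpos 0)
  set D : ℝ := MX * Λ₀⁻¹ with hDdef
  have hD0 : 0 ≤ D := by positivity
  have hdelta : ∀ t s : ℝ, R 0 ≤ t → delta μ Λ x₀ t x₀ s ≤ D := by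
    intro t s ht
    have htpos : 0 < t := lt_of_lt_of_le (hRpos 0) ht
    have hle : (∫⁻ x in ball x₀ (2*s) \ ball x₀ t,
        ENNReal.ofReal ((Λ x₀ (dist x x₀))⁻¹) ∂μ) ≤ ENNReal.ofReal (Λ₀⁻¹) * μ Set.univ := by
      calc (∫⁻ x in ball x₀ (2*s) \ ball x₀ t, ENNReal.ofReal ((Λ x₀ (dist x x₀))⁻¹) ∂μ)
          ≤ ∫⁻ _x in ball x₀ (2*s) \ ball x₀ t, ENNReal.ofReal (Λ₀⁻¹) ∂μ := by
            apply setLIntegral_mono' (measurableSet_ball.diff measurableSet_ball)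
            intro x hx
            apply ENNReal.ofReal_le_ofReal
            have hd : t ≤ dist x x₀ := le_of_not_gt (fun hc => hx.2 (mem_ball.mpr hc))
            have h1 : Λ₀ ≤ Λ x₀ (dist x x₀) :=
              le_trans (hΛmono x₀ (R 0) t (hRpos 0) ht) (hΛmono x₀ t _ htpos hd)
            exact inv_anti₀ hΛ₀ h1
        _ = ENNReal.ofReal (Λ₀⁻¹) * μ (ball x₀ (2*s) \ ball x₀ t) := setLIntegral_const _ _
        _ ≤ ENNReal.ofReal (Λ₀⁻¹) * μ Set.univ :=
            mul_le_mul_right (measure_mono (Set.subset_univ _)) _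
    have hfin2 : ENNReal.ofReal (Λ₀⁻¹) * μ Set.univ ≠ ⊤ :=
      ENNReal.mul_ne_top ENNReal.ofReal_ne_top hfin.ne
    calc delta μ Λ x₀ t x₀ s
        ≤ (ENNReal.ofReal (Λ₀⁻¹) * μ Set.univ).toReal := ENNReal.toReal_mono hfin2 hle
      _ = Λ₀⁻¹ * MX := by rw [ENNReal.toReal_mul, ENNReal.toReal_ofReal (by positivity)]
      _ = D := mul_comm _ _
  have hdelta0 : ∀ t s : ℝ, 0 ≤ delta μ Λ x₀ t x₀ s := fun _ _ => ENNReal.toReal_nonneg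
  have hRHS : ∀ (c : X) (rad t s : ℝ), R 0 ≤ t →
      ENNReal.ofReal (MX ^ (1/q - 1) * (1 + D)⁻¹) ≤
        μ (ball c rad) ^ (1/q - 1) * (ENNReal.ofReal (1 + delta μ Λ x₀ t x₀ s))⁻¹ := by
    intro c rad t s ht
    rw [ENNReal.ofReal_mul (by positivity), ENNReal.ofReal_inv_of_pos (by linarith)]
    apply mul_le_mul'
    · rw [← ENNReal.ofReal_rpow_of_pos hMX, ENNReal.ofReal_toReal hfin.ne]
      have he : (1/q - 1 : ℝ) = -(1 - 1/q) := by ring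
      rw [he, ENNReal.rpow_neg, ENNReal.rpow_neg]
      exact ENNReal.inv_le_inv.mpr
        (ENNReal.rpow_le_rpow (measure_mono (Set.subset_univ _)) (by linarith))
    · exact ENNReal.inv_le_inv.mpr
        (ENNReal.ofReal_le_ofReal (by linarith [hdelta t s ht]))
  -- compensating ball
  have hB0pos : 0 < μ (Bs 0) := lt_of_lt_of_le hn₀ (measure_mono (ball_subset_ball (hRn₀ 0)))
  have hB0fin : μ (Bs 0) ≠ ⊤ := (lt_of_le_of_lt (measure_mono (Set.subset_univ _)) hfin).ne
  set mB : ℝ := (μ (Bs 0)).toReal with hmBdef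
  have hmB : 0 < mB := ENNReal.toReal_pos hB0pos.ne' hB0fin
  set τ : ℝ := (1 + D)⁻¹ * MX ^ (1/q - 1) * (mB ^ (1/q))⁻¹ with hτdef
  have hτ : 0 < τ := by positivity
  set V : ℝ := 2*(1+D)*MX^(1-1/q)*(MX^(1/q)+2) + 2*(max MX 1)/(τ*mB) with hVdef
  have hV : 0 < V := by positivity
  have hqne : (ENNReal.ofReal q) ≠ 0 := by
    simp only [ne_eq, ENNReal.ofReal_eq_zero, not_le]; linarith
  have hqnt : (ENNReal.ofReal q) ≠ ⊤ := ENNReal.ofReal_ne_top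
  have htq : (ENNReal.ofReal q).toReal = q := ENNReal.toReal_ofReal q0.le
  have hAfin : ∀ j, μ (Aset j) ≠ ⊤ :=
    fun j => (lt_of_le_of_lt (measure_mono (Set.subset_univ _)) hfin).ne
  refine ⟨2*V, by linarith, ?_⟩
  intro g hg ℓ hℓ hgb
  haveI : IsFiniteMeasure μ := ⟨hfin⟩
  set κ : ℝ := (∫ y, g y ∂μ) / MX with hκdef
  set g₀ : X → ℝ := fun x => g x - κ with hg₀def
  have hgi : Integrable g μ :=
    (integrable_const ℓ).mono' hg.aestronglyMeasurable
      (ae_of_all _ fun x => by simpa [Real.norm_eq_abs] using hgb x)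
  have hκabs : |κ| ≤ ℓ := by
    have h1 : ‖∫ y, g y ∂μ‖ ≤ ℓ * (μ Set.univ).toReal :=
      norm_integral_le_of_norm_le_const
        (ae_of_all _ fun x => by simpa [Real.norm_eq_abs] using hgb x)
    rw [Real.norm_eq_abs, ← hMXdef] at h1
    rw [hκdef, abs_div, abs_of_pos hMX, div_le_iff₀ hMX]
    linarith
  have hg₀b : ∀ x, |g₀ x| ≤ 2*ℓ := by
    intro x
    have h1 := hgb x
    calc |g₀ x| = |g x + -κ| := by simp only [hg₀def]; rw [sub_eq_add_neg]
      _ ≤ |g x| + |(-κ)| := abs_add_le _ _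
      _ ≤ ℓ + ℓ := by rw [abs_neg]; exact add_le_add h1 hκabs
      _ = 2*ℓ := by ring
  have hg₀m : Measurable g₀ := hg.sub measurable_const
  have hg₀i : Integrable g₀ μ := hgi.sub (integrable_const κ)
  have hg₀0 : ∫ x, g₀ x ∂μ = 0 := by
    have h2 : ∫ x, g₀ x ∂μ = (∫ x, g x ∂μ) - MX * κ := by
      simp only [hg₀def]
      rw [integral_sub hgi (integrable_const κ), integral_const, smul_eq_mul, measureReal_def, ← hMXdef]
    rw [h2, hκdef, mul_div_cancel₀ _ hMX.ne', sub_self]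
  set u : ℕ → ℝ := fun j => m j ^ (1/q) + (2⁻¹:ℝ)^j with hudef
  have hu : ∀ j, 0 < u j := fun j => by
    have h1 : (0:ℝ) ≤ m j ^ (1/q) := Real.rpow_nonneg (hm0 j) _
    have h2 : (0:ℝ) < (2⁻¹:ℝ)^j := by positivity
    simp only [hudef]; linarith
  set L₁ : ℕ → ℝ := fun j => 2*ℓ*(1+D)*MX^(1-1/q)*(u j) with hL₁def
  have hL₁ : ∀ j, 0 < L₁ j := fun j => by
    have := hu j
    simp only [hL₁def]; positivity
  set I : ℕ → ℝ := fun j => ∫ x in Aset j, g₀ x ∂μ with hIdef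
  have hIabs : ∀ j, |I j| ≤ 2*ℓ * m j := by
    intro j
    have h1 : ‖∫ x in Aset j, g₀ x ∂μ‖ ≤ (2*ℓ) * (μ (Aset j)).toReal :=
      norm_setIntegral_le_of_norm_le_const
        (lt_of_le_of_lt (measure_mono (Set.subset_univ _)) hfin)
        (fun x _ => by simpa [Real.norm_eq_abs] using hg₀b x)
    simpa [Real.norm_eq_abs, hmdef] using h1
  set L₂ : ℕ → ℝ := fun j => -(I j) / (τ * mB) with hL₂def
  set a₂ : X → ℝ := (Bs 0).indicator (fun _ => τ) with ha₂def
  set a₁ : ℕ → X → ℝ := fun j x => (Aset j).indicator g₀ x / L₁ j with ha₁def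
  set bb : ℕ → X → ℝ := fun j x => L₁ j * a₁ j x + L₂ j * a₂ x with hbbdef
  set M : ℕ → ℝ := fun j => |L₁ j| + |L₂ j| with hMdef
  have hblocks : ∀ j, IsAtomicBlock μ Λ ρ q (bb j) (M j) := by
    intro j
    refine ⟨x₀, x₀, x₀, R (j+1), R (j+1), R 0, L₁ j, L₂ j, a₁ j, a₂,
      hRpos _, hRpos _, hRpos 0, subset_rfl, ball_subset_ball (hRmono (Nat.zero_le _)),
      ?_, ?_, ?_, ?_, ?_, fun x => rfl, ?_, ?_, rfl⟩
    · -- support bb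
      intro x hx
      rw [Function.mem_support] at hx
      by_contra hx'
      apply hx
      have h1 : x ∉ Aset j := fun hmem => hx' (hAsub j hmem)
      have h2 : x ∉ Bs 0 := fun hmem => hx' (hBsub (Nat.zero_le _) hmem)
      show bb j x = 0
      simp only [hbbdef, ha₁def, ha₂def, Set.indicator_of_notMem h1,
        Set.indicator_of_notMem h2, zero_div, mul_zero, add_zero]
    · -- support a₁
      intro x hx
      rw [Function.mem_support] at hx
      by_contra hx'
      apply hx
      have h1 : x ∉ Aset j := fun hmem => hx' (hAsub j hmem)
      simp only [ha₁def, Set.indicator_of_notMem h1, zero_div]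
    · -- support a₂
      intro x hx
      rw [Function.mem_support] at hx
      by_contra hx'
      apply hx
      have h2 : x ∉ Bs 0 := hx'
      simp only [ha₂def, Set.indicator_of_notMem h2]
    · -- integrable
      have hi1 : Integrable (fun x => L₁ j * a₁ j x) μ :=
        ((hg₀i.indicator (hAm j)).div_const (L₁ j)).const_mul (L₁ j)
      have hi2 : Integrable (fun x => L₂ j * a₂ x) μ :=
        ((integrable_const τ).indicator measurableSet_ball).const_mul (L₂ j)
      exact hi1.add hi2
    · -- integral zero
      have hi1 : Integrable (fun x => L₁ j * a₁ j x) μ :=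
        ((hg₀i.indicator (hAm j)).div_const (L₁ j)).const_mul (L₁ j)
      have hi2 : Integrable (fun x => L₂ j * a₂ x) μ :=
        ((integrable_const τ).indicator measurableSet_ball).const_mul (L₂ j)
      have h1 : ∫ x, L₁ j * a₁ j x ∂μ = I j := by
        rw [integral_const_mul]
        simp only [ha₁def]
        rw [integral_div, integral_indicator (hAm j)]
        rw [mul_div_cancel₀ _ (hL₁ j).ne']
      have h2 : ∫ x, L₂ j * a₂ x ∂μ = -(I j) := by
        rw [integral_const_mul]
        simp only [ha₂def]
        rw [integral_indicator measurableSet_ball, setIntegral_const, smul_eq_mul, measureReal_def, ← hmBdef]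
        simp only [hL₂def]
        field_simp
      show (∫ x, L₁ j * a₁ j x + L₂ j * a₂ x ∂μ) = 0
      rw [integral_add hi1 hi2, h1, h2, add_neg_cancel]
    · -- eLpNorm a₁
      have step1 : eLpNorm (a₁ j) (ENNReal.ofReal q) μ ≤
          eLpNorm ((Aset j).indicator (fun _ => 2*ℓ/L₁ j)) (ENNReal.ofReal q) μ := by
        apply eLpNorm_mono
        intro x
        by_cases hx : x ∈ Aset j
        · simp only [ha₁def, Set.indicator_of_mem hx, Real.norm_eq_abs]
          rw [abs_of_pos (by positivity : (0:ℝ) < 2*ℓ/L₁ j), abs_div, abs_of_pos (hL₁ j)]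
          gcongr
          exact hg₀b x
        · simp only [ha₁def, Set.indicator_of_notMem hx, zero_div, norm_zero]
          positivity
      have step2 : eLpNorm ((Aset j).indicator (fun _ => 2*ℓ/L₁ j)) (ENNReal.ofReal q) μ
          = ENNReal.ofReal ((2*ℓ/L₁ j) * m j ^ (1/q)) := by
        rw [eLpNorm_indicator_const (hAm j) hqne hqnt, htq]
        rw [Real.enorm_eq_ofReal (by positivity)]
        rw [← ENNReal.ofReal_toReal (hAfin j),
          ENNReal.ofReal_rpow_of_nonneg ENNReal.toReal_nonneg (by positivity),
          ← ENNReal.ofReal_mul (by positivity)]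
      have step3 : (2*ℓ/L₁ j) * m j ^ (1/q) ≤ MX ^ (1/q-1) * (1+D)⁻¹ := by
        rw [div_mul_eq_mul_div, div_le_iff₀ (hL₁ j)]
        have h1 : m j ^ (1/q) ≤ u j := by
          simp only [hudef]
          have : (0:ℝ) ≤ (2⁻¹:ℝ)^j := by positivity
          linarith
        have h2 : (1+D)⁻¹ * (1+D) = 1 := inv_mul_cancel₀ (by linarith)
        have h3 : MX ^ (1-1/q) * MX ^ (1/q-1) = 1 := by
          rw [← Real.rpow_add hMX]; norm_num
        calc 2*ℓ*(m j ^ (1/q)) ≤ 2*ℓ*(u j) := by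
              apply mul_le_mul_of_nonneg_left h1 (by positivity)
          _ = MX ^ (1/q-1) * (1+D)⁻¹ * L₁ j := by
              simp only [hL₁def]
              linear_combination (-(2*ℓ*u j*(1+D)⁻¹*(1+D))) * h3 + (-(2*ℓ*u j)) * h2
      calc eLpNorm (a₁ j) (ENNReal.ofReal q) μ
          ≤ eLpNorm ((Aset j).indicator (fun _ => 2*ℓ/L₁ j)) (ENNReal.ofReal q) μ := step1
        _ = ENNReal.ofReal ((2*ℓ/L₁ j) * m j ^ (1/q)) := step2
        _ ≤ ENNReal.ofReal (MX ^ (1/q-1) * (1+D)⁻¹) := ENNReal.ofReal_le_ofReal step3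
        _ ≤ _ := hRHS x₀ (ρ * R (j+1)) (R (j+1)) (R (j+1)) (hRmono (Nat.zero_le _))
    · -- eLpNorm a₂
      have step : eLpNorm a₂ (ENNReal.ofReal q) μ = ENNReal.ofReal (τ * mB ^ (1/q)) := by
        simp only [ha₂def]
        rw [eLpNorm_indicator_const measurableSet_ball hqne hqnt, htq]
        rw [Real.enorm_eq_ofReal hτ.le]
        rw [← ENNReal.ofReal_toReal hB0fin, ← hmBdef]
        rw [ENNReal.ofReal_rpow_of_nonneg hmB.le (by positivity)]
        rw [← ENNReal.ofReal_mul hτ.le]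
      have req : τ * mB ^ (1/q) = MX ^ (1/q-1) * (1+D)⁻¹ := by
        have hmbq : (0:ℝ) < mB ^ (1/q) := by positivity
        simp only [hτdef]
        field_simp
      rw [step, req]
      exact hRHS x₀ (ρ * R 0) (R 0) (R (j+1)) le_rfl
  have hhs : ∀ x, HasSum (fun j => bb j x) (g₀ x) := by
    intro x
    have hxmem : ∃ j, x ∈ Aset j := by
      have hxu : x ∈ ⋃ j, Aset j := by rw [hAcov]; trivial
      exact Set.mem_iUnion.mp hxu
    obtain ⟨j₀, hj₀⟩ := hxmem
    have part1 : HasSum (fun j => (Aset j).indicator g₀ x) (g₀ x) := by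
      have heq : (fun j => (Aset j).indicator g₀ x) = fun j => if j = j₀ then g₀ x else 0 := by
        funext j
        by_cases hj : j = j₀
        · subst hj; rw [if_pos rfl, Set.indicator_of_mem hj₀]
        · rw [if_neg hj,
            Set.indicator_of_notMem (fun hxj => Set.disjoint_left.mp (hAdisj hj) hxj hj₀)]
      rw [heq]
      exact hasSum_ite_eq j₀ (g₀ x)
    have part2 : HasSum I 0 := by
      have h1 := hasSum_integral_iUnion hAm hAdisj (hg₀i.integrableOn)
      rw [hAcov, setIntegral_univ, hg₀0] at h1
      exact h1
    have part3 : HasSum (fun j => L₂ j * a₂ x) 0 := by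
      have h1 : HasSum (fun j => -(I j) / (τ*mB)) (-(0:ℝ)/(τ*mB)) := (part2.neg).div_const _
      have h2 := h1.mul_right (a₂ x)
      simp only [neg_zero, zero_div, zero_mul] at h2
      simp only [hL₂def]
      exact h2
    have part4 := part1.add part3
    rw [add_zero] at part4
    have hfe : (fun j => bb j x) = fun j => (Aset j).indicator g₀ x + L₂ j * a₂ x := by
      funext j
      simp only [hbbdef, ha₁def]
      rw [mul_comm, div_mul_cancel₀ _ (hL₁ j).ne']
    rw [hfe]
    exact part4
  have hMj : ∀ j, M j ≤ ℓ * V * (2⁻¹:ℝ)^j := by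
    intro j
    have hub : u j ≤ (MX^(1/q)+2)*(2⁻¹:ℝ)^j := by
      rcases Nat.eq_zero_or_pos j with hj | hj
      · subst hj
        simp only [hudef, pow_zero, mul_one]
        have h5 : m 0 ^ (1/q) ≤ MX ^ (1/q) := Real.rpow_le_rpow (hm0 0) (hmMX 0) (by positivity)
        linarith
      · have h1 := hmrq j hj
        have h2 : (0:ℝ) ≤ (2⁻¹:ℝ)^j := by positivity
        have h3 : (0:ℝ) ≤ MX^(1/q) := Real.rpow_nonneg hMX.le _
        simp only [hudef]
        nlinarith [mul_nonneg h3 h2]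
    have hb1 : |L₁ j| ≤ ℓ * (2*(1+D)*MX^(1-1/q)*(MX^(1/q)+2)) * (2⁻¹:ℝ)^j := by
      rw [abs_of_pos (hL₁ j)]
      simp only [hL₁def]
      calc 2*ℓ*(1+D)*MX^(1-1/q)*(u j)
          ≤ 2*ℓ*(1+D)*MX^(1-1/q)*((MX^(1/q)+2)*(2⁻¹:ℝ)^j) := by
            apply mul_le_mul_of_nonneg_left hub (by positivity)
        _ = ℓ * (2*(1+D)*MX^(1-1/q)*(MX^(1/q)+2)) * (2⁻¹:ℝ)^j := by ring
    have hb2 : |L₂ j| ≤ ℓ * (2*(max MX 1)/(τ*mB)) * (2⁻¹:ℝ)^j := by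
      simp only [hL₂def]
      rw [abs_div, abs_neg, abs_of_pos (by positivity : (0:ℝ) < τ*mB)]
      calc |I j| / (τ*mB) ≤ (2*ℓ*((max MX 1) * (2⁻¹:ℝ)^j)) / (τ*mB) := by
            gcongr
            exact le_trans (hIabs j) (by nlinarith [hmgeo j, hℓ])
        _ = ℓ * (2*(max MX 1)/(τ*mB)) * (2⁻¹:ℝ)^j := by ring
    calc M j = |L₁ j| + |L₂ j| := rfl
      _ ≤ ℓ * (2*(1+D)*MX^(1-1/q)*(MX^(1/q)+2)) * (2⁻¹:ℝ)^j
            + ℓ * (2*(max MX 1)/(τ*mB)) * (2⁻¹:ℝ)^j := add_le_add hb1 hb2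
      _ = ℓ * V * (2⁻¹:ℝ)^j := by rw [hVdef]; ring
  have htsum : ∑' j, ENNReal.ofReal (M j) ≤ ENNReal.ofReal ((2*V) * ℓ) := by
    have h1 : ∀ j : ℕ, ENNReal.ofReal (M j) ≤
        ENNReal.ofReal (ℓ*V) * (ENNReal.ofReal (2⁻¹:ℝ))^j := by
      intro j
      rw [← ENNReal.ofReal_pow (by norm_num), ← ENNReal.ofReal_mul (by positivity)]
      exact ENNReal.ofReal_le_ofReal (by have := hMj j; linarith [hMj j])
    calc ∑' j, ENNReal.ofReal (M j)
        ≤ ∑' j : ℕ, ENNReal.ofReal (ℓ*V) * (ENNReal.ofReal (2⁻¹:ℝ))^j :=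
          ENNReal.tsum_le_tsum h1
      _ = ENNReal.ofReal (ℓ*V) * ∑' j : ℕ, (ENNReal.ofReal (2⁻¹:ℝ))^j := ENNReal.tsum_mul_left
      _ = ENNReal.ofReal (ℓ*V) * 2 := by
          rw [ENNReal.tsum_geometric]
          congr 1
          rw [show ENNReal.ofReal (2⁻¹:ℝ) = 2⁻¹ by
            rw [ENNReal.ofReal_inv_of_pos (by norm_num : (0:ℝ) < 2)]
            norm_num]
          rw [ENNReal.one_sub_inv_two, inv_inv]
      _ = ENNReal.ofReal ((2*V)*ℓ) := by
          rw [show (2:ℝ≥0∞) = ENNReal.ofReal (2:ℝ) from (ENNReal.ofReal_ofNat 2).symm,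
            ← ENNReal.ofReal_mul (by positivity)]
          congr 1
          ring
  exact le_trans (iInf_le _ ⟨⟨bb, M⟩, hblocks, ae_of_all _ hhs⟩) htsum



/-- If `μ(X) < ∞`, `T` is sublinear, bounded from `H¹(μ)` to `L^{1,∞}(μ)`, and
`∫ |T1|^r dμ < ∞` for some `r ∈ (0,1)`, then for every `g ∈ L^∞` with `‖g‖_∞ ≤ ℓ`,
`(1/μ(X)) ∫ |Tg|^r dμ ≤ C ℓ^r`. -/
theorem average_rpow_T_bounded {X : Type*} [MetricSpace X] [MeasurableSpace X]
    [BorelSpace X] (μ : Measure X) (Λ : X → ℝ → ℝ) (Cl ρ q : ℝ) (N₀ : ℕ)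
    (hΛpos : ∀ (x : X) (r : ℝ), 0 < r → 0 < Λ x r)
    (hΛmono : ∀ (x : X) (r s : ℝ), 0 < r → r ≤ s → Λ x r ≤ Λ x s)
    (hΛdom : ∀ (x : X) (r : ℝ), 0 < r → μ (ball x r) ≤ ENNReal.ofReal (Λ x r))
    (hΛdouble : ∀ (x : X) (r : ℝ), 0 < r → Λ x r ≤ Cl * Λ x (r / 2))
    (hgd : ∀ (x : X) (r : ℝ), ∃ s : Finset X,
      s.card ≤ N₀ ∧ ball x r ⊆ ⋃ y ∈ s, ball y (r / 2))
    (hρ : 1 < ρ) (hq : 1 < q)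
    (hfin : μ Set.univ < ⊤) (hpos : 0 < μ Set.univ)
    (T : (X → ℝ) → X → ℝ)
    (hsub : ∀ (f g : X → ℝ) (x : X), |T (fun y => f y + g y) x| ≤ |T f x| + |T g x|)
    (hhom : ∀ (c : ℝ) (f : X → ℝ) (x : X), |T (fun y => c * f y) x| = |c| * |T f x|)
    (A : ℝ) (hA : 0 < A)
    (hT : ∀ (h : X → ℝ) (t : ℝ), 0 < t →
      ENNReal.ofReal t * μ {x | t < |T h x|} ≤ ENNReal.ofReal A * H1Norm μ Λ ρ q h)
    (r : ℝ) (hr : r ∈ Set.Ioo (0 : ℝ) 1)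
    (hT1 : ∫⁻ x, ENNReal.ofReal (|T (fun _ => 1) x| ^ r) ∂μ < ⊤) :
    ∃ C : ℝ, 0 < C ∧ ∀ (g : X → ℝ), Measurable g → ∀ ℓ : ℝ, 0 < ℓ → (∀ x, |g x| ≤ ℓ) →
      ∫⁻ x, ENNReal.ofReal (|T g x| ^ r) ∂μ ≤
        ENNReal.ofReal (C * ℓ ^ r) * μ Set.univ := by
  classical
  obtain ⟨hr0, hr1⟩ := hr
  obtain ⟨K, hK, hH1⟩ := h1_aux μ Λ ρ q hΛpos hΛmono hq hfin hpos
  set MX : ℝ := (μ Set.univ).toReal with hMXdef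
  have hMX : 0 < MX := ENNReal.toReal_pos hpos.ne' hfin.ne
  -- geometric constant
  set gr : ℝ≥0∞ := ENNReal.ofReal ((2:ℝ) ^ (r-1)) with hgrdef
  have hgr1 : gr < 1 := by
    rw [hgrdef, ← ENNReal.ofReal_one]
    exact ENNReal.ofReal_lt_ofReal_iff_of_nonneg (by positivity) |>.mpr
      (Real.rpow_lt_one_of_one_lt_of_neg (by norm_num) (by linarith))
  have hSGne : (1 - gr)⁻¹ ≠ ⊤ := by
    rw [ne_eq, ENNReal.inv_eq_top, tsub_eq_zero_iff_le]
    exact not_le.mpr hgr1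
  set SG : ℝ≥0∞ := (1 - gr)⁻¹ with hSGdef
  set I₁ : ℝ≥0∞ := ∫⁻ x, ENNReal.ofReal (|T (fun _ => 1) x| ^ r) ∂μ with hI₁def
  set Z : ℝ≥0∞ := μ Set.univ + ENNReal.ofReal (A*K*2^r) * SG + I₁ with hZdef
  have hZne : Z ≠ ⊤ := by
    rw [hZdef]
    exact ENNReal.add_ne_top.mpr ⟨ENNReal.add_ne_top.mpr ⟨hfin.ne,
      ENNReal.mul_ne_top ENNReal.ofReal_ne_top hSGne⟩, hT1.ne⟩
  refine ⟨Z.toReal / MX + 1, by positivity, ?_⟩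
  intro g hg ℓ hℓ hgb
  set κ : ℝ := (∫ y, g y ∂μ) / MX with hκdef
  set g₀ : X → ℝ := fun x => g x - κ with hg₀def
  haveI : IsFiniteMeasure μ := ⟨hfin⟩
  have hκabs : |κ| ≤ ℓ := by
    have h1 : ‖∫ y, g y ∂μ‖ ≤ ℓ * (μ Set.univ).toReal :=
      norm_integral_le_of_norm_le_const
        (ae_of_all _ fun x => by simpa [Real.norm_eq_abs] using hgb x)
    rw [Real.norm_eq_abs, ← hMXdef] at h1
    rw [hκdef, abs_div, abs_of_pos hMX, div_le_iff₀ hMX]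
    linarith
  have hH1g : H1Norm μ Λ ρ q g₀ ≤ ENNReal.ofReal (K*ℓ) := hH1 g hg ℓ hℓ hgb
  -- weak type sets
  have hSmeas : ∀ n : ℕ, μ {x | (2:ℝ)^n * ℓ < |T g₀ x|} ≤ ENNReal.ofReal (A*K/2^n) := by
    intro n
    have htpos : (0:ℝ) < (2:ℝ)^n * ℓ := by positivity
    have h1 := hT g₀ ((2:ℝ)^n * ℓ) htpos
    have h2 : ENNReal.ofReal A * H1Norm μ Λ ρ q g₀ ≤ ENNReal.ofReal (A*(K*ℓ)) := by
      rw [ENNReal.ofReal_mul hA.le]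
      exact mul_le_mul_right hH1g _
    have h3 : ENNReal.ofReal ((2:ℝ)^n * ℓ) * μ {x | (2:ℝ)^n * ℓ < |T g₀ x|}
        ≤ ENNReal.ofReal (A*(K*ℓ)) := le_trans h1 h2
    rw [mul_comm] at h3
    rw [← ENNReal.le_div_iff_mul_le (Or.inl (by simp only [ne_eq, ENNReal.ofReal_eq_zero, not_le]; positivity))
      (Or.inl ENNReal.ofReal_ne_top)] at h3
    calc μ {x | (2:ℝ)^n * ℓ < |T g₀ x|}
        ≤ ENNReal.ofReal (A*(K*ℓ)) / ENNReal.ofReal ((2:ℝ)^n * ℓ) := h3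
      _ = ENNReal.ofReal (A*(K*ℓ) / ((2:ℝ)^n * ℓ)) := (ENNReal.ofReal_div_of_pos htpos).symm
      _ = ENNReal.ofReal (A*K/2^n) := by
          congr 1
          field_simp
  choose U hUsub hUmeas hUeq using fun n : ℕ =>
    exists_measurable_superset μ {x | (2:ℝ)^n * ℓ < |T g₀ x|}
  set Φ : X → ℝ≥0∞ := fun x => ENNReal.ofReal (ℓ^r)
      + ∑' n : ℕ, (U n).indicator (fun _ => ENNReal.ofReal ((2^(n+1)*ℓ)^r)) x with hΦdef
  have hΦmeas : Measurable Φ := by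
    apply Measurable.const_add
    exact Measurable.ennreal_tsum fun n =>
      measurable_const.indicator (hUmeas n)
  have hpt1 : ∀ x, ENNReal.ofReal (|T g₀ x| ^ r) ≤ Φ x := by
    intro x
    by_cases hx : |T g₀ x| ≤ ℓ
    · have : ENNReal.ofReal (|T g₀ x| ^ r) ≤ ENNReal.ofReal (ℓ^r) :=
        ENNReal.ofReal_le_ofReal (Real.rpow_le_rpow (abs_nonneg _) hx hr0.le)
      exact le_trans this (by rw [hΦdef]; exact le_add_of_nonneg_right bot_le)
    · push_neg at hx
      have hex : ∃ n : ℕ, |T g₀ x| ≤ 2^(n+1) * ℓ := by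
        obtain ⟨n, hn⟩ := pow_unbounded_of_one_lt (|T g₀ x| / ℓ) (by norm_num : (1:ℝ) < 2)
        exact ⟨n, by rw [div_lt_iff₀ hℓ] at hn; nlinarith [pow_lt_pow_right₀ (by norm_num : (1:ℝ) < 2) (by omega : n < n+1)]⟩
      set n := Nat.find hex with hndef
      have hn2 : |T g₀ x| ≤ 2^(n+1) * ℓ := Nat.find_spec hex
      have hn1 : (2:ℝ)^n * ℓ < |T g₀ x| := by
        rcases Nat.eq_zero_or_pos n with h0 | h0
        · rw [h0]; simpa using hx
        · have := Nat.find_min hex (by omega : n - 1 < n)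
          push_neg at this
          have hn1' : n - 1 + 1 = n := by omega
          rwa [hn1'] at this
      have hxU : x ∈ U n := hUsub n hn1
      calc ENNReal.ofReal (|T g₀ x| ^ r)
          ≤ ENNReal.ofReal ((2^(n+1)*ℓ)^r) :=
            ENNReal.ofReal_le_ofReal (Real.rpow_le_rpow (abs_nonneg _) hn2 hr0.le)
        _ = (U n).indicator (fun _ => ENNReal.ofReal ((2^(n+1)*ℓ)^r)) x := by
            rw [Set.indicator_of_mem hxU]
        _ ≤ ∑' k : ℕ, (U k).indicator (fun _ => ENNReal.ofReal ((2^(k+1)*ℓ)^r)) x :=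
            ENNReal.le_tsum n
        _ ≤ Φ x := by rw [hΦdef]; exact le_add_of_nonneg_left bot_le
  have hpt2 : ∀ x, ENNReal.ofReal (|T g x| ^ r) ≤
      Φ x + ENNReal.ofReal (ℓ^r) * ENNReal.ofReal (|T (fun _ => 1) x| ^ r) := by
    intro x
    have hsplit : |T g x| ≤ |T g₀ x| + |κ| * |T (fun _ => 1) x| := by
      have hgeq : g = fun y => g₀ y + (fun z => κ * (fun _ => (1:ℝ)) z) y := by
        funext y
        simp [hg₀def]
      calc |T g x| = |T (fun y => g₀ y + (fun z => κ * (fun _ => (1:ℝ)) z) y) x| := by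
            rw [← hgeq]
        _ ≤ |T g₀ x| + |T (fun z => κ * (fun _ => (1:ℝ)) z) x| := hsub _ _ x
        _ = |T g₀ x| + |κ| * |T (fun _ => (1:ℝ)) x| := by rw [hhom κ (fun _ => (1:ℝ)) x]
    have h2 : |T g x| ^ r ≤ |T g₀ x| ^ r + (|κ| * |T (fun _ => 1) x|) ^ r := by
      calc |T g x| ^ r ≤ (|T g₀ x| + |κ| * |T (fun _ => 1) x|) ^ r :=
            Real.rpow_le_rpow (abs_nonneg _) hsplit hr0.le
        _ ≤ _ := rpow_subadd (abs_nonneg _) (by positivity) hr0 hr1.le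
    have h3 : (|κ| * |T (fun _ => 1) x|) ^ r ≤ ℓ^r * |T (fun _ => 1) x| ^ r := by
      rw [Real.mul_rpow (abs_nonneg _) (abs_nonneg _)]
      apply mul_le_mul_of_nonneg_right
        (Real.rpow_le_rpow (abs_nonneg _) hκabs hr0.le)
        (Real.rpow_nonneg (abs_nonneg _) _)
    calc ENNReal.ofReal (|T g x| ^ r)
        ≤ ENNReal.ofReal (|T g₀ x| ^ r + ℓ^r * |T (fun _ => 1) x| ^ r) :=
          ENNReal.ofReal_le_ofReal (by linarith)
      _ ≤ ENNReal.ofReal (|T g₀ x| ^ r) + ENNReal.ofReal (ℓ^r * |T (fun _ => 1) x| ^ r) :=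
          ENNReal.ofReal_add_le
      _ ≤ Φ x + ENNReal.ofReal (ℓ^r) * ENNReal.ofReal (|T (fun _ => 1) x| ^ r) := by
          apply add_le_add (hpt1 x)
          rw [ENNReal.ofReal_mul (by positivity)]
  -- integrate
  have hint : ∫⁻ x, ENNReal.ofReal (|T g x| ^ r) ∂μ ≤
      ∫⁻ x, Φ x ∂μ + ENNReal.ofReal (ℓ^r) * I₁ := by
    calc ∫⁻ x, ENNReal.ofReal (|T g x| ^ r) ∂μ
        ≤ ∫⁻ x, Φ x + ENNReal.ofReal (ℓ^r) * ENNReal.ofReal (|T (fun _ => 1) x| ^ r) ∂μ :=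
          lintegral_mono hpt2
      _ = ∫⁻ x, Φ x ∂μ + ∫⁻ x, ENNReal.ofReal (ℓ^r) * ENNReal.ofReal (|T (fun _ => 1) x| ^ r) ∂μ :=
          lintegral_add_left hΦmeas _
      _ = ∫⁻ x, Φ x ∂μ + ENNReal.ofReal (ℓ^r) * I₁ := by
          rw [lintegral_const_mul' _ _ ENNReal.ofReal_ne_top, hI₁def]
  have hΦint : ∫⁻ x, Φ x ∂μ ≤
      ENNReal.ofReal (ℓ^r) * μ Set.univ + ENNReal.ofReal (ℓ^r) * (ENNReal.ofReal (A*K*2^r) * SG) := by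
    have h1 : ∫⁻ x, Φ x ∂μ = ENNReal.ofReal (ℓ^r) * μ Set.univ
        + ∑' n : ℕ, ENNReal.ofReal ((2^(n+1)*ℓ)^r) * μ (U n) := by
      rw [hΦdef]
      rw [lintegral_add_left measurable_const, lintegral_const,
        lintegral_tsum fun n => (measurable_const.indicator (hUmeas n)).aemeasurable]
      congr 1
      exact tsum_congr fun n => lintegral_indicator_const (hUmeas n) _
    have h2 : ∀ n : ℕ, ENNReal.ofReal ((2^(n+1)*ℓ)^r) * μ (U n) ≤
        ENNReal.ofReal (ℓ^r) * (ENNReal.ofReal (A*K*2^r) * gr ^ n) := by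
      intro n
      rw [hUeq n]
      calc ENNReal.ofReal ((2^(n+1)*ℓ)^r) * μ {x | (2:ℝ)^n * ℓ < |T g₀ x|}
          ≤ ENNReal.ofReal ((2^(n+1)*ℓ)^r) * ENNReal.ofReal (A*K/2^n) :=
            mul_le_mul_right (hSmeas n) _
        _ = ENNReal.ofReal ((2^(n+1)*ℓ)^r * (A*K/2^n)) := by
            rw [← ENNReal.ofReal_mul (by positivity)]
        _ = ENNReal.ofReal (ℓ^r * (A*K*2^r * ((2:ℝ)^(r-1))^n)) := by
            congr 1
            have h2 : (0:ℝ) < 2 := two_pos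
            rw [Real.mul_rpow (by positivity) hℓ.le]
            rw [← Real.rpow_natCast (2:ℝ) (n+1), ← Real.rpow_natCast (2:ℝ) n,
              ← Real.rpow_natCast ((2:ℝ)^(r-1)) n,
              ← Real.rpow_mul h2.le, ← Real.rpow_mul h2.le]
            rw [div_eq_mul_inv, ← Real.rpow_neg h2.le]
            rw [show (A * K * (2:ℝ) ^ r * 2 ^ ((r - 1) * (n:ℝ))) = A*K*(2:ℝ)^(r + (r-1)*(n:ℝ)) from by
              rw [Real.rpow_add h2]; ring]
            rw [show ((2:ℝ) ^ (((n+1:ℕ):ℝ) * r) * ℓ ^ r * (A * K * (2:ℝ) ^ (-(n:ℝ)))) =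
                ℓ^r * (A*K*(2:ℝ)^(((n+1:ℕ):ℝ)*r + -(n:ℝ))) from by rw [Real.rpow_add h2]; ring]
            congr 2
            push_cast
            ring
        _ = ENNReal.ofReal (ℓ^r) * (ENNReal.ofReal (A*K*2^r) * gr ^ n) := by
            rw [ENNReal.ofReal_mul (by positivity), ENNReal.ofReal_mul (by positivity),
              hgrdef, ← ENNReal.ofReal_pow (by positivity)]
    calc ∫⁻ x, Φ x ∂μ = ENNReal.ofReal (ℓ^r) * μ Set.univ
          + ∑' n : ℕ, ENNReal.ofReal ((2^(n+1)*ℓ)^r) * μ (U n) := h1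
      _ ≤ ENNReal.ofReal (ℓ^r) * μ Set.univ
          + ∑' n : ℕ, ENNReal.ofReal (ℓ^r) * (ENNReal.ofReal (A*K*2^r) * gr ^ n) :=
          add_le_add_right (ENNReal.tsum_le_tsum h2) _
      _ = ENNReal.ofReal (ℓ^r) * μ Set.univ
          + ENNReal.ofReal (ℓ^r) * (ENNReal.ofReal (A*K*2^r) * ∑' n : ℕ, gr ^ n) := by
          rw [ENNReal.tsum_mul_left, ENNReal.tsum_mul_left]
      _ = _ := by rw [ENNReal.tsum_geometric, hSGdef]
  have hfinal : ∫⁻ x, ENNReal.ofReal (|T g x| ^ r) ∂μ ≤ ENNReal.ofReal (ℓ^r) * Z := by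
    calc ∫⁻ x, ENNReal.ofReal (|T g x| ^ r) ∂μ
        ≤ ∫⁻ x, Φ x ∂μ + ENNReal.ofReal (ℓ^r) * I₁ := hint
      _ ≤ ENNReal.ofReal (ℓ^r) * μ Set.univ + ENNReal.ofReal (ℓ^r) * (ENNReal.ofReal (A*K*2^r) * SG)
          + ENNReal.ofReal (ℓ^r) * I₁ := add_le_add_left hΦint _
      _ = ENNReal.ofReal (ℓ^r) * Z := by rw [hZdef]; ring
  refine le_trans hfinal ?_
  have hC1 : Z ≤ ENNReal.ofReal (Z.toReal / MX + 1) * μ Set.univ := by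
    calc Z = ENNReal.ofReal (Z.toReal) := (ENNReal.ofReal_toReal hZne).symm
      _ = ENNReal.ofReal (Z.toReal / MX * MX) := by rw [div_mul_cancel₀ _ hMX.ne']
      _ = ENNReal.ofReal (Z.toReal / MX) * ENNReal.ofReal MX := ENNReal.ofReal_mul (by positivity)
      _ ≤ ENNReal.ofReal (Z.toReal / MX + 1) * ENNReal.ofReal MX := by
          apply mul_le_mul_left
          exact ENNReal.ofReal_le_ofReal (by linarith)
      _ = ENNReal.ofReal (Z.toReal / MX + 1) * μ Set.univ := by
          rw [hMXdef, ENNReal.ofReal_toReal hfin.ne]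
  calc ENNReal.ofReal (ℓ^r) * Z
      ≤ ENNReal.ofReal (ℓ^r) * (ENNReal.ofReal (Z.toReal / MX + 1) * μ Set.univ) :=
        mul_le_mul_right hC1 _
    _ = ENNReal.ofReal ((Z.toReal / MX + 1) * ℓ^r) * μ Set.univ := by
        rw [ENNReal.ofReal_mul (by positivity), ← mul_assoc, mul_comm (ENNReal.ofReal (ℓ^r))]
    _ = _ := by rw [hMXdef]
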